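/- The map sending a partition λ (with every odd part greater than every even part, odd parts distinct, even parts distinct) to the partition obtained by adding 1 to each of the first m parts and subtracting 1 from each of the last m parts, where m is the minimum of the number of odd parts and the number of even parts (and fixing λ if it has parts of only one parity), is an injection from the set of all-distinct partitions of n with odd parts above even parts into the set of all-distinct partitions of n with even parts above odd parts. -/

import Mathlib

/-- Every odd part is greater than every even part. -/
def oddAbove (l : Multiset ℕ) : Prop :=
  ∀ a ∈ l, ∀ b ∈ l, Odd a → Even b → b < a

/-- Every even part is greater than every odd part. -/
def evenAbove (l : Multiset ℕ) : Prop :=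
  ∀ a ∈ l, ∀ b ∈ l, Even a → Odd b → b < a

/-- The odd parts are distinct. -/
def oddDistinct (l : Multiset ℕ) : Prop :=
  ∀ a, Odd a → l.count a ≤ 1

/-- The even parts are distinct. -/
def evenDistinct (l : Multiset ℕ) : Prop :=
  ∀ a, Even a → l.count a ≤ 1

/-- The number of partitions of `n` whose multiset of parts satisfies `P`. -/
noncomputable def pcount (n : ℕ) (P : Multiset ℕ → Prop) : ℕ :=
  Nat.card {p : Nat.Partition n // P p.parts}

/-- forward list operation -/
def phiL (L : List ℕ) (m : ℕ) : List ℕ :=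
  (L.take m).map (fun x => x - 1) ++
    (L.drop (L.length - m)).map (fun x => x + 1) ++
    (L.drop m).take (L.length - 2 * m)

/-- backward list operation -/
def psiL (L : List ℕ) (m : ℕ) : List ℕ :=
  (L.take m).map (fun x => x + 1) ++
    (L.drop (L.length - m)).map (fun x => x - 1) ++
    (L.drop m).take (L.length - 2 * m)

lemma sort_coe_of_sorted (L : List ℕ) (h : L.Pairwise (· ≤ ·)) :
    Multiset.sort (↑L : Multiset ℕ) (· ≤ ·) = L :=
  List.Perm.eq_of_pairwise' (Multiset.pairwise_sort _ _) h
    (Multiset.coe_eq_coe.mp (Multiset.sort_eq _ _))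

lemma sum_map_sub_one (l : List ℕ) (h : ∀ x ∈ l, 1 ≤ x) :
    (l.map (fun x => x - 1)).sum + l.length = l.sum := by
  induction l with
  | nil => simp
  | cons a l ih =>
    simp only [List.map_cons, List.sum_cons, List.length_cons]
    have ha := h a (by simp)
    have := ih (fun x hx => h x (by simp [hx]))
    omega

lemma sum_map_add_one (l : List ℕ) :
    (l.map (fun x => x + 1)).sum = l.sum + l.length := by
  induction l with
  | nil => simp
  | cons a l ih => simp [ih]; omega

lemma odd_sub_one' {x : ℕ} (h : Even x) (hx : 0 < x) : Odd (x - 1) := by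
  obtain ⟨k, hk⟩ := h; exact ⟨k - 1, by omega⟩

/-- The master structural lemma. -/
lemma abc (A B C : List ℕ)
    (hAs : A.Pairwise (· ≤ ·)) (hBs : B.Pairwise (· ≤ ·)) (hCs : C.Pairwise (· ≤ ·))
    (hAnd : A.Nodup) (hBnd : B.Nodup) (hCnd : C.Nodup)
    (hAB : ∀ a ∈ A, ∀ b ∈ B, a < b) (hBC : ∀ b ∈ B, ∀ c ∈ C, b < c)
    (hAC : ∀ a ∈ A, ∀ c ∈ C, a < c)
    (hAodd : ∀ a ∈ A, Odd a) (hCeven : ∀ c ∈ C, Even c)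
    (hBpar : (∀ b ∈ B, Odd b) ∨ (∀ b ∈ B, Even b))
    (hlen : C.length = A.length) (hA : A ≠ []) :
    let M : Multiset ℕ := ↑(A ++ C ++ B)
    M.Nodup ∧ evenAbove M ∧ (∃ a ∈ M, Odd a) ∧ (∃ b ∈ M, Even b) ∧
      (↑(psiL (Multiset.sort M (· ≤ ·))
          (min (Multiset.card (M.filter (fun a => Odd a)))
            (Multiset.card (M.filter (fun a => Even a))))) : Multiset ℕ) =
        ↑(A.map (fun x => x + 1)) + ↑(C.map (fun x => x - 1)) + (↑B : Multiset ℕ) := by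
  intro M
  have hC : C ≠ [] := by
    intro h; apply hA; rw [← List.length_eq_zero_iff] at *; omega
  have hMcoe : M = (↑A : Multiset ℕ) + ↑C + ↑B := by
    simp [M, Multiset.coe_add]
  -- disjointness facts
  have dAB : ∀ x, x ∈ A → x ∈ B → False := fun x h1 h2 => lt_irrefl x (hAB x h1 x h2)
  have dBC : ∀ x, x ∈ B → x ∈ C → False := fun x h1 h2 => lt_irrefl x (hBC x h1 x h2)
  have dAC : ∀ x, x ∈ A → x ∈ C → False := fun x h1 h2 => lt_irrefl x (hAC x h1 x h2)
  refine ⟨?_, ?_, ?_, ?_, ?_⟩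
  · -- Nodup
    rw [hMcoe, Multiset.nodup_add, Multiset.nodup_add]
    refine ⟨⟨Multiset.coe_nodup.mpr hAnd, Multiset.coe_nodup.mpr hCnd, ?_⟩,
      Multiset.coe_nodup.mpr hBnd, ?_⟩
    · rw [Multiset.disjoint_left]; intro a ha hc
      exact dAC a (Multiset.mem_coe.mp ha) (Multiset.mem_coe.mp hc)
    · rw [Multiset.disjoint_left]; intro a ha hb
      rw [Multiset.mem_add] at ha
      rcases ha with ha | ha
      · exact dAB a (Multiset.mem_coe.mp ha) (Multiset.mem_coe.mp hb)
      · exact dBC a (Multiset.mem_coe.mp hb) (Multiset.mem_coe.mp ha)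
  · -- evenAbove
    intro x hx y hy hxe hyo
    rw [hMcoe] at hx hy
    simp only [Multiset.mem_add, Multiset.mem_coe] at hx hy
    have hyA : y ∈ A ∨ y ∈ B := by
      rcases hy with (h | h) | h
      · exact Or.inl h
      · exact absurd (hCeven y h) (Nat.not_even_iff_odd.mpr hyo)
      · exact Or.inr h
    have hxC : x ∈ C ∨ x ∈ B := by
      rcases hx with (h | h) | h
      · exact absurd (hAodd x h) (Nat.not_odd_iff_even.mpr hxe)
      · exact Or.inl h
      · exact Or.inr h
    rcases hyA with hy' | hy'
    · rcases hxC with hx' | hx'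
      · exact hAC y hy' x hx'
      · exact hAB y hy' x hx'
    · rcases hxC with hx' | hx'
      · exact hBC y hy' x hx'
      · -- both in B: contradiction with parity of B
        rcases hBpar with h | h
        · exact absurd (h x hx') (Nat.not_odd_iff_even.mpr hxe)
        · exact absurd (h y hy') (Nat.not_even_iff_odd.mpr hyo)
  · obtain ⟨a, ha⟩ := List.exists_mem_of_ne_nil A hA
    exact ⟨a, by rw [hMcoe]; simp [ha], hAodd a ha⟩
  · obtain ⟨c, hc⟩ := List.exists_mem_of_ne_nil C hC
    exact ⟨c, by rw [hMcoe]; simp [hc], hCeven c hc⟩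
  · -- the psi recovery
    have hsort : Multiset.sort M (· ≤ ·) = A ++ B ++ C := by
      have hperm : M = ↑(A ++ B ++ C) := by
        simp only [M]
        rw [Multiset.coe_eq_coe, List.append_assoc, List.append_assoc]
        exact List.Perm.append_left A (List.perm_append_comm)
      rw [hperm]
      apply sort_coe_of_sorted
      rw [List.append_assoc]
      apply (List.pairwise_append).mpr
      refine ⟨hAs, (List.pairwise_append).mpr ⟨hBs, hCs, fun b hb c hc => le_of_lt (hBC b hb c hc)⟩, ?_⟩
      intro a ha z hz
      rw [List.mem_append] at hz
      rcases hz with h | h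
      · exact le_of_lt (hAB a ha z h)
      · exact le_of_lt (hAC a ha z h)
    -- counts
    have hcA : Multiset.filter (fun a => Odd a) (↑A : Multiset ℕ) = ↑A :=
      Multiset.filter_eq_self.mpr (fun a ha => hAodd a (Multiset.mem_coe.mp ha))
    have hcC : Multiset.filter (fun a => Odd a) (↑C : Multiset ℕ) = 0 :=
      Multiset.filter_eq_nil.mpr
        (fun a ha => Nat.not_odd_iff_even.mpr (hCeven a (Multiset.mem_coe.mp ha)))
    have hcC' : Multiset.filter (fun a => Even a) (↑C : Multiset ℕ) = ↑C :=
      Multiset.filter_eq_self.mpr (fun a ha => hCeven a (Multiset.mem_coe.mp ha))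
    have hcA' : Multiset.filter (fun a => Even a) (↑A : Multiset ℕ) = 0 :=
      Multiset.filter_eq_nil.mpr
        (fun a ha => Nat.not_even_iff_odd.mpr (hAodd a (Multiset.mem_coe.mp ha)))
    have hmin : min (Multiset.card (M.filter (fun a => Odd a)))
        (Multiset.card (M.filter (fun a => Even a))) = A.length := by
      rcases hBpar with h | h
      · have hB1 : Multiset.filter (fun a => Odd a) (↑B : Multiset ℕ) = ↑B :=
          Multiset.filter_eq_self.mpr (fun a ha => h a (Multiset.mem_coe.mp ha))
        have hB2 : Multiset.filter (fun a => Even a) (↑B : Multiset ℕ) = 0 :=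
          Multiset.filter_eq_nil.mpr
            (fun a ha => Nat.not_even_iff_odd.mpr (h a (Multiset.mem_coe.mp ha)))
        rw [hMcoe]
        simp only [Multiset.filter_add, hcA, hcC, hcA', hcC', hB1, hB2]
        simp [Multiset.coe_card, hlen]
      · have hB1 : Multiset.filter (fun a => Odd a) (↑B : Multiset ℕ) = 0 :=
          Multiset.filter_eq_nil.mpr
            (fun a ha => Nat.not_odd_iff_even.mpr (h a (Multiset.mem_coe.mp ha)))
        have hB2 : Multiset.filter (fun a => Even a) (↑B : Multiset ℕ) = ↑B :=
          Multiset.filter_eq_self.mpr (fun a ha => h a (Multiset.mem_coe.mp ha))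
        rw [hMcoe]
        simp only [Multiset.filter_add, hcA, hcC, hcA', hcC', hB1, hB2]
        simp [Multiset.coe_card, hlen]
    rw [hsort, hmin]
    -- now compute psiL (A ++ B ++ C) A.length
    have hlenABC : (A ++ B ++ C).length = A.length + B.length + A.length := by
      simp [hlen]; omega
    have h1 : (A ++ B ++ C).take A.length = A := by
      rw [List.append_assoc]; exact List.take_left' rfl
    have h2 : (A ++ B ++ C).drop ((A ++ B ++ C).length - A.length) = C := by
      rw [hlenABC]
      have : A.length + B.length + A.length - A.length = (A ++ B).length := by
        simp
      rw [this]
      exact List.drop_left' rfl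
    have h3 : ((A ++ B ++ C).drop A.length).take ((A ++ B ++ C).length - 2 * A.length) = B := by
      rw [hlenABC, List.append_assoc]
      rw [List.drop_left' rfl]
      have : A.length + B.length + A.length - 2 * A.length = B.length := by omega
      rw [this]
      exact List.take_left' rfl
    rw [psiL, h1, h2, h3]
    simp [Multiset.coe_add]

lemma core (P : Multiset ℕ) (hnd : P.Nodup) (hoa : oddAbove P) (hpos : ∀ x ∈ P, 0 < x)
    (hodd : ∃ a ∈ P, Odd a) (heven : ∃ b ∈ P, Even b) :
    let m := min (Multiset.card (P.filter (fun a => Odd a)))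
      (Multiset.card (P.filter (fun a => Even a)))
    let M : Multiset ℕ := ↑(phiL (Multiset.sort P (· ≤ ·)) m)
    M.sum = P.sum ∧ (∀ x ∈ M, 0 < x) ∧ M.Nodup ∧ evenAbove M ∧
      (∃ a ∈ M, Odd a) ∧ (∃ b ∈ M, Even b) ∧
      (↑(psiL (Multiset.sort M (· ≤ ·))
          (min (Multiset.card (M.filter (fun a => Odd a)))
            (Multiset.card (M.filter (fun a => Even a))))) : Multiset ℕ) = P := by
  intro m M
  set E := Multiset.sort (P.filter (fun a => Even a)) (· ≤ ·) with hEdef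
  set O := Multiset.sort (P.filter (fun a => Odd a)) (· ≤ ·) with hOdef
  have hEcoe : (↑E : Multiset ℕ) = P.filter (fun a => Even a) := Multiset.sort_eq _ _
  have hOcoe : (↑O : Multiset ℕ) = P.filter (fun a => Odd a) := Multiset.sort_eq _ _
  have hEs : E.Pairwise (· ≤ ·) := Multiset.pairwise_sort _ _
  have hOs : O.Pairwise (· ≤ ·) := Multiset.pairwise_sort _ _
  have hEnd : E.Nodup := Multiset.coe_nodup.mp (hEcoe ▸ hnd.filter _)
  have hOnd : O.Nodup := Multiset.coe_nodup.mp (hOcoe ▸ hnd.filter _)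
  have memE : ∀ a ∈ E, a ∈ P ∧ Even a := by
    intro a ha
    have : a ∈ (↑E : Multiset ℕ) := Multiset.mem_coe.mpr ha
    rw [hEcoe, Multiset.mem_filter] at this; exact this
  have memO : ∀ a ∈ O, a ∈ P ∧ Odd a := by
    intro a ha
    have : a ∈ (↑O : Multiset ℕ) := Multiset.mem_coe.mpr ha
    rw [hOcoe, Multiset.mem_filter] at this; exact this
  have hE2 : ∀ a ∈ E, 2 ≤ a := by
    intro a ha
    obtain ⟨hmem, hev⟩ := memE a ha
    obtain ⟨k, hk⟩ := hev
    have := hpos a hmem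
    omega
  have cross : ∀ a ∈ E, ∀ b ∈ O, a < b := by
    intro a ha b hb
    obtain ⟨haP, hae⟩ := memE a ha
    obtain ⟨hbP, hbo⟩ := memO b hb
    exact hoa b hbP a haP hbo hae
  have hP : P = (↑E : Multiset ℕ) + ↑O := by
    rw [hEcoe, hOcoe]
    have h1 := Multiset.filter_add_not (fun a => Even a) P
    have h2 : Multiset.filter (fun a => ¬Even a) P = Multiset.filter (fun a => Odd a) P :=
      Multiset.filter_congr (fun x _ => (Nat.not_even_iff_odd))
    rw [h2] at h1
    exact h1.symm
  have hsortP : Multiset.sort P (· ≤ ·) = E ++ O := by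
    have : P = ↑(E ++ O) := by rw [hP]; simp [Multiset.coe_add]
    rw [this]
    apply sort_coe_of_sorted
    exact (List.pairwise_append).mpr ⟨hEs, hOs, fun a ha b hb => le_of_lt (cross a ha b hb)⟩
  set e := E.length with hedef
  set o := O.length with hodef
  have hm : m = min o e := by
    simp only [m, ← hEcoe, ← hOcoe, Multiset.coe_card, hedef, hodef]
  have he1 : 1 ≤ e := by
    obtain ⟨b, hbP, hbe⟩ := heven
    have : b ∈ E := by
      rw [← Multiset.mem_coe, hEcoe, Multiset.mem_filter]; exact ⟨hbP, hbe⟩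
    have := List.length_pos_iff.mpr (List.ne_nil_of_mem this)
    omega
  have ho1 : 1 ≤ o := by
    obtain ⟨b, hbP, hbe⟩ := hodd
    have : b ∈ O := by
      rw [← Multiset.mem_coe, hOcoe, Multiset.mem_filter]; exact ⟨hbP, hbe⟩
    have := List.length_pos_iff.mpr (List.ne_nil_of_mem this)
    omega
  have hsumP : P.sum = E.sum + O.sum := by
    rw [hP]; simp [Multiset.coe_add, Multiset.sum_coe]
  rcases le_total e o with hcase | hcase
  · -- e ≤ o, m = e
    have hme : m = e := by rw [hm]; omega
    set A := E.map (fun x => x - 1) with hAdef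
    set B := O.take (o - e) with hBdef
    set C := (O.drop (o - e)).map (fun x => x + 1) with hCdef
    have hlenEO : (E ++ O).length = e + o := by simp; omega
    have hphi : phiL (E ++ O) e = A ++ C ++ B := by
      unfold phiL
      have t1 : (E ++ O).take e = E := List.take_left' rfl
      have t2 : (E ++ O).drop ((E ++ O).length - e) = O.drop (o - e) := by
        have : (E ++ O).length - e = E.length + (o - e) := by rw [hlenEO]; omega
        rw [this, List.drop_append]; simp
      have t3 : ((E ++ O).drop e).take ((E ++ O).length - 2 * e) = O.take (o - e) := by
        rw [List.drop_left' rfl, hlenEO]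
        congr 1
        omega
      rw [t1, t2, t3]
    have habc := abc A B C
      (List.Pairwise.map _ (fun a b h => Nat.sub_le_sub_right h 1) hEs)
      (hOs.take) (List.Pairwise.map _ (fun a b h => Nat.add_le_add_right h 1) (hOs.drop))
      (hEnd.map_on (fun x hx y hy hxy => by
        have := hE2 x hx; have := hE2 y hy; omega))
      (hOnd.sublist (List.take_sublist _ _))
      ((hOnd.sublist (List.drop_sublist _ _)).map_on (fun x _ y _ hxy => by omega))
      (by -- hAB
        intro a ha b hb
        obtain ⟨x, hx, rfl⟩ := List.mem_map.mp ha
        have hxb : x < b := cross x hx b (List.take_subset _ _ hb)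
        have := hE2 x hx
        omega)
      (by -- hBC
        intro b hb c hc
        obtain ⟨y, hy, rfl⟩ := List.mem_map.mp hc
        have hby : b ≤ y := by
          have hsplit := hOs
          rw [← List.take_append_drop (o - e) O] at hsplit
          exact ((List.pairwise_append).mp hsplit).2.2 b hb y hy
        omega)
      (by -- hAC
        intro a ha c hc
        obtain ⟨x, hx, rfl⟩ := List.mem_map.mp ha
        obtain ⟨y, hy, rfl⟩ := List.mem_map.mp hc
        have := cross x hx y (List.drop_subset _ _ hy)
        omega)
      (by -- hAodd
        intro a ha
        obtain ⟨x, hx, rfl⟩ := List.mem_map.mp ha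
        exact odd_sub_one' (memE x hx).2 (by have := hE2 x hx; omega))
      (by -- hCeven
        intro c hc
        obtain ⟨y, hy, rfl⟩ := List.mem_map.mp hc
        exact ((memO y (List.drop_subset _ _ hy)).2).add_one)
      (Or.inl (fun b hb => (memO b (List.take_subset _ _ hb)).2))
      (by -- hlen
        simp only [hCdef, hAdef, List.length_map, List.length_drop]
        omega)
      (by -- hA ≠ []
        intro h
        have h2 : A.length = 0 := by rw [h]; rfl
        rw [hAdef, List.length_map] at h2
        omega)
    have hMeq : M = ↑(A ++ C ++ B) := by
      simp only [M, hsortP, hme, hphi]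
    obtain ⟨h1, h2, h3, h4, h5⟩ := habc
    rw [← hMeq] at h1 h2 h3 h4 h5
    refine ⟨?_, ?_, h1, h2, h3, h4, ?_⟩
    · -- sum
      rw [hMeq, Multiset.sum_coe, List.sum_append, List.sum_append, hsumP]
      have sA : A.sum + e = E.sum := sum_map_sub_one E (fun x hx => by have := hE2 x hx; omega)
      have sC : C.sum = (O.drop (o - e)).sum + (O.drop (o - e)).length := by
        rw [hCdef, sum_map_add_one]
      have hld : (O.drop (o - e)).length = o - (o - e) := by simp; omega
      have sO : B.sum + (O.drop (o - e)).sum = O.sum := by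
        rw [hBdef, ← List.sum_append, List.take_append_drop]
      omega
    · -- pos
      rw [hMeq]
      intro x hx
      rw [Multiset.mem_coe, List.append_assoc, List.mem_append, List.mem_append] at hx
      rcases hx with h | h | h
      · obtain ⟨y, hy, rfl⟩ := List.mem_map.mp h
        have := hE2 y hy; omega
      · obtain ⟨y, _, rfl⟩ := List.mem_map.mp h
        omega
      · exact hpos x (memO x (List.take_subset _ _ h)).1
    · -- psi recovery
      rw [h5]
      have hA1 : A.map (fun x => x + 1) = E := by
        rw [hAdef, List.map_map]
        have : E.map ((fun x => x + 1) ∘ fun x => x - 1) = E.map id := by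
          apply List.map_congr_left
          intro a ha
          have := hE2 a ha
          simp
          omega
        rw [this, List.map_id]
      have hC1 : C.map (fun x => x - 1) = O.drop (o - e) := by
        rw [hCdef, List.map_map]
        have : (O.drop (o - e)).map ((fun x => x - 1) ∘ fun x => x + 1)
            = (O.drop (o - e)).map id := by
          apply List.map_congr_left; intro a _; simp
        rw [this, List.map_id]
      rw [hA1, hC1, hP, hBdef]
      have hOx : (↑(O.take (o - e)) : Multiset ℕ) + ↑(O.drop (o - e)) = ↑O := by
        rw [Multiset.coe_add, List.take_append_drop]
      rw [add_assoc]
      congr 1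
      rw [add_comm]
      exact hOx
  · -- o ≤ e, m = o
    have hme : m = o := by rw [hm]; omega
    set A := (E.take o).map (fun x => x - 1) with hAdef
    set B := E.drop o with hBdef
    set C := O.map (fun x => x + 1) with hCdef
    have hlenEO : (E ++ O).length = e + o := by simp; omega
    have hphi : phiL (E ++ O) o = A ++ C ++ B := by
      unfold phiL
      have t1 : (E ++ O).take o = E.take o := by
        rw [List.take_append]
        have : o - E.length = 0 := by omega
        rw [this]
        simp
      have t2 : (E ++ O).drop ((E ++ O).length - o) = O := by
        have : (E ++ O).length - o = E.length := by rw [hlenEO]; omega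
        rw [this, List.drop_left' rfl]
      have t3 : ((E ++ O).drop o).take ((E ++ O).length - 2 * o) = E.drop o := by
        rw [List.drop_append]
        have h0 : o - E.length = 0 := by omega
        rw [h0, List.drop]
        rw [hlenEO]
        have : e + o - 2 * o = e - o := by omega
        rw [this, List.take_append]
        have hld : (E.drop o).length = e - o := by simp; omega
        rw [List.take_of_length_le (by omega), hld]
        simp
      rw [t1, t2, t3]
    have hEsplit : ∀ x ∈ E.take o, ∀ b ∈ E.drop o, x ≤ b := by
      have hsplit := hEs
      rw [← List.take_append_drop o E] at hsplit
      exact ((List.pairwise_append).mp hsplit).2.2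
    have habc := abc A B C
      (List.Pairwise.map _ (fun a b h => Nat.sub_le_sub_right h 1) (hEs.take))
      (hEs.drop) (List.Pairwise.map _ (fun a b h => Nat.add_le_add_right h 1) hOs)
      ((hEnd.sublist (List.take_sublist _ _)).map_on (fun x hx y hy hxy => by
        have := hE2 x (List.take_subset _ _ hx); have := hE2 y (List.take_subset _ _ hy); omega))
      (hEnd.sublist (List.drop_sublist _ _))
      (hOnd.map_on (fun x _ y _ hxy => by omega))
      (by -- hAB
        intro a ha b hb
        obtain ⟨x, hx, rfl⟩ := List.mem_map.mp ha
        have hxb : x ≤ b := hEsplit x hx b hb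
        have := hE2 x (List.take_subset _ _ hx)
        omega)
      (by -- hBC
        intro b hb c hc
        obtain ⟨y, hy, rfl⟩ := List.mem_map.mp hc
        have := cross b (List.drop_subset _ _ hb) y hy
        omega)
      (by -- hAC
        intro a ha c hc
        obtain ⟨x, hx, rfl⟩ := List.mem_map.mp ha
        obtain ⟨y, hy, rfl⟩ := List.mem_map.mp hc
        have := cross x (List.take_subset _ _ hx) y hy
        omega)
      (by -- hAodd
        intro a ha
        obtain ⟨x, hx, rfl⟩ := List.mem_map.mp ha
        exact odd_sub_one' (memE x (List.take_subset _ _ hx)).2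
          (by have := hE2 x (List.take_subset _ _ hx); omega))
      (by -- hCeven
        intro c hc
        obtain ⟨y, hy, rfl⟩ := List.mem_map.mp hc
        exact ((memO y hy).2).add_one)
      (Or.inr (fun b hb => (memE b (List.drop_subset _ _ hb)).2))
      (by -- hlen
        simp only [hCdef, hAdef, List.length_map, List.length_take]
        omega)
      (by -- hA ≠ []
        intro h
        have h2 : A.length = 0 := by rw [h]; rfl
        rw [hAdef, List.length_map, List.length_take] at h2
        omega)
    have hMeq : M = ↑(A ++ C ++ B) := by
      simp only [M, hsortP, hme, hphi]
    obtain ⟨h1, h2, h3, h4, h5⟩ := habc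
    rw [← hMeq] at h1 h2 h3 h4 h5
    refine ⟨?_, ?_, h1, h2, h3, h4, ?_⟩
    · -- sum
      rw [hMeq, Multiset.sum_coe, List.sum_append, List.sum_append, hsumP]
      have sA : A.sum + (E.take o).length = (E.take o).sum :=
        sum_map_sub_one (E.take o) (fun x hx => by have := hE2 x (List.take_subset _ _ hx); omega)
      have sC : C.sum = O.sum + o := by rw [hCdef, sum_map_add_one]
      have sE : (E.take o).sum + B.sum = E.sum := by
        rw [hBdef, ← List.sum_append, List.take_append_drop]
      have hlt : (E.take o).length = o := by simp; omega
      omega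
    · -- pos
      rw [hMeq]
      intro x hx
      rw [Multiset.mem_coe, List.append_assoc, List.mem_append, List.mem_append] at hx
      rcases hx with h | h | h
      · obtain ⟨y, hy, rfl⟩ := List.mem_map.mp h
        have := hE2 y (List.take_subset _ _ hy); omega
      · obtain ⟨y, _, rfl⟩ := List.mem_map.mp h
        omega
      · exact hpos x (memE x (List.drop_subset _ _ h)).1
    · -- psi recovery
      rw [h5]
      have hA1 : A.map (fun x => x + 1) = E.take o := by
        rw [hAdef, List.map_map]
        have : (E.take o).map ((fun x => x + 1) ∘ fun x => x - 1) = (E.take o).map id := by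
          apply List.map_congr_left
          intro a ha
          have := hE2 a (List.take_subset _ _ ha)
          simp
          omega
        rw [this, List.map_id]
      have hC1 : C.map (fun x => x - 1) = O := by
        rw [hCdef, List.map_map]
        have : O.map ((fun x => x - 1) ∘ fun x => x + 1) = O.map id := by
          apply List.map_congr_left; intro a _; simp
        rw [this, List.map_id]
      rw [hA1, hC1, hP, hBdef]
      have hEx : (↑(E.take o) : Multiset ℕ) + ↑(E.drop o) = ↑E := by
        rw [Multiset.coe_add, List.take_append_drop]
      rw [add_right_comm, hEx]

lemma evenAbove_of_par {s : Multiset ℕ} (h : (∀ a ∈ s, Odd a) ∨ (∀ a ∈ s, Even a)) :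
    evenAbove s := by
  intro a ha b hb hae hbo
  rcases h with h | h
  · exact absurd (h a ha) (Nat.not_odd_iff_even.mpr hae)
  · exact absurd (h b hb) (Nat.not_even_iff_odd.mpr hbo)

lemma mixed_of_not {s : Multiset ℕ} (h : ¬((∀ a ∈ s, Odd a) ∨ (∀ a ∈ s, Even a))) :
    (∃ a ∈ s, Odd a) ∧ (∃ b ∈ s, Even b) := by
  push_neg at h
  obtain ⟨⟨a, ha, ha2⟩, ⟨b, hb, hb2⟩⟩ := h
  exact ⟨⟨b, hb, Nat.not_even_iff_odd.mp hb2⟩, ⟨a, ha, Nat.not_odd_iff_even.mp ha2⟩⟩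

lemma not_par_of_mixed {s : Multiset ℕ} (h1 : ∃ a ∈ s, Odd a) (h2 : ∃ b ∈ s, Even b) :
    ¬((∀ a ∈ s, Odd a) ∨ (∀ a ∈ s, Even a)) := by
  obtain ⟨a, ha, hao⟩ := h1
  obtain ⟨b, hb, hbe⟩ := h2
  rintro (h | h)
  · exact absurd (h b hb) (Nat.not_odd_iff_even.mpr hbe)
  · exact absurd (h a ha) (Nat.not_even_iff_odd.mpr hao)

open Classical in
/-- the reverse operation on multisets -/
noncomputable def Gm (s : Multiset ℕ) : Multiset ℕ :=
  if (∀ a ∈ s, Odd a) ∨ (∀ a ∈ s, Even a) then s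
  else ↑(psiL (Multiset.sort s (· ≤ ·))
      (min (Multiset.card (s.filter (fun a => Odd a)))
        (Multiset.card (s.filter (fun a => Even a)))))

open Classical in
noncomputable def fmap (n : ℕ)
    (p : {p : Nat.Partition n // p.parts.Nodup ∧ oddAbove p.parts}) :
    {p : Nat.Partition n // p.parts.Nodup ∧ evenAbove p.parts} :=
  if h : (∀ a ∈ p.1.parts, Odd a) ∨ (∀ a ∈ p.1.parts, Even a) then
    ⟨p.1, p.2.1, evenAbove_of_par h⟩
  else
    have hmix := mixed_of_not h
    have hc := core p.1.parts p.2.1 p.2.2 (fun _ hx => p.1.parts_pos hx) hmix.1 hmix.2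
    ⟨⟨↑(phiL (Multiset.sort p.1.parts (· ≤ ·))
        (min (Multiset.card (p.1.parts.filter (fun a => Odd a)))
          (Multiset.card (p.1.parts.filter (fun a => Even a))))),
      fun hx => hc.2.1 _ hx, by rw [hc.1, p.1.parts_sum]⟩,
      hc.2.2.1, hc.2.2.2.1⟩

lemma fmap_recov (n : ℕ) (p : {p : Nat.Partition n // p.parts.Nodup ∧ oddAbove p.parts}) :
    Gm ((fmap n p).1.parts) = p.1.parts := by
  unfold fmap
  split
  · next h =>
    simp only
    rw [Gm, if_pos h]
  · next h =>
    have hmix := mixed_of_not h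
    have hc := core p.1.parts p.2.1 p.2.2 (fun _ hx => p.1.parts_pos hx) hmix.1 hmix.2
    simp only
    rw [Gm, if_neg (not_par_of_mixed hc.2.2.2.2.1 hc.2.2.2.2.2.1)]
    exact hc.2.2.2.2.2.2

theorem stmt14 (n : ℕ) :
    ∃ f : {p : Nat.Partition n // p.parts.Nodup ∧ oddAbove p.parts} →
        {p : Nat.Partition n // p.parts.Nodup ∧ evenAbove p.parts},
      Function.Injective f ∧
        ∀ p : {p : Nat.Partition n // p.parts.Nodup ∧ oddAbove p.parts},
          (((∀ a ∈ p.1.parts, Odd a) ∨ (∀ a ∈ p.1.parts, Even a)) →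
              (f p).1.parts = p.1.parts) ∧
          (((∃ a ∈ p.1.parts, Odd a) ∧ (∃ b ∈ p.1.parts, Even b)) →
            ∀ m : ℕ,
              m = min (Multiset.card (p.1.parts.filter (fun a => Odd a)))
                    (Multiset.card (p.1.parts.filter (fun a => Even a))) →
              ∀ L : List ℕ, L = Multiset.sort p.1.parts (· ≤ ·) →
                (f p).1.parts =
                  ((L.take m).map (fun x => x - 1) ++
                    (L.drop (L.length - m)).map (fun x => x + 1) ++
                    (L.drop m).take (L.length - 2 * m) : List ℕ)) := by
  refine ⟨fmap n, ?_, ?_⟩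
  · intro p q h
    have := congrArg (fun x : {p : Nat.Partition n // p.parts.Nodup ∧ evenAbove p.parts} =>
      Gm x.1.parts) h
    simp only [fmap_recov] at this
    exact Subtype.ext (Nat.Partition.ext this)
  · intro p
    constructor
    · intro h
      unfold fmap
      rw [dif_pos h]
    · intro hmix m hm L hL
      unfold fmap
      rw [dif_neg (not_par_of_mixed hmix.1 hmix.2)]
      subst hm hL
      rfl
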